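/- Let ũ ∈ D[a] ∩ L^∞ be a minimizer of J(u) = (a[u,u] + A‖u‖²_∞)/‖u‖₂² with ‖ũ‖_∞ = 1, and let K = {v ∈ D[a] : |v| ≤ 1 m-a.e.}. Then ũ solves the variational inequality: ũ ∈ K and a[ũ, v − ũ] ≥ J(ũ) ∫ ũ (v − ũ) dm for all v ∈ K. -/

import Mathlib

open MeasureTheory Filter Topology ENNReal

/-- An abstract Dirichlet form `(a, D[a])` on `L²(X, m)`: a symmetric, non-negative
bilinear form defined on a (dense) subspace of `L²`, satisfying the Markov property. -/
structure DirichletForm (X : Type) [MeasurableSpace X] (μ : Measure X) where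
  dom : Set (X → ℝ)
  form : (X → ℝ) → (X → ℝ) → ℝ
  zero_mem : (0 : X → ℝ) ∈ dom
  dom_add : ∀ u ∈ dom, ∀ v ∈ dom, u + v ∈ dom
  dom_smul : ∀ (c : ℝ), ∀ u ∈ dom, c • u ∈ dom
  memL2 : ∀ u ∈ dom, MemLp u 2 μ
  symm : ∀ u v, form u v = form v u
  add_left : ∀ u v w, form (u + v) w = form u w + form v w
  smul_left : ∀ (c : ℝ) (u v), form (c • u) v = c * form u v
  nonneg : ∀ u, 0 ≤ form u u
  markov : ∀ u ∈ dom, (fun x => min 1 (max (u x) 0)) ∈ dom ∧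
    form (fun x => min 1 (max (u x) 0)) (fun x => min 1 (max (u x) 0)) ≤ form u u

private lemma DirichletForm.add_right' {X : Type} [MeasurableSpace X] {μ : Measure X}
    (a : DirichletForm X μ) (p q r : X → ℝ) :
    a.form p (q + r) = a.form p q + a.form p r := by
  rw [a.symm, a.add_left, a.symm q, a.symm r]

private lemma DirichletForm.smul_right' {X : Type} [MeasurableSpace X] {μ : Measure X}
    (a : DirichletForm X μ) (c : ℝ) (p q : X → ℝ) :
    a.form p (c • q) = c * a.form p q := by
  rw [a.symm, a.smul_left, a.symm]

private lemma DirichletForm.expand {X : Type} [MeasurableSpace X] {μ : Measure X}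
    (a : DirichletForm X μ) (u z : X → ℝ) (t : ℝ) :
    a.form (u + t • z) (u + t • z)
      = a.form u u + 2 * t * a.form u z + t ^ 2 * a.form z z := by
  rw [a.add_left, a.smul_left, a.add_right', a.add_right', a.smul_right', a.smul_right',
    a.symm z u]
  ring

/-- Case `p = 1`: a minimizer `ũ` of `J` with `‖ũ‖_∞ = 1` solves the variational
inequality `a[ũ, v - ũ] ≥ J(ũ) ∫ ũ (v - ũ) dm` over `K = {v ∈ D[a] : |v| ≤ 1 a.e.}`. -/
theorem minimizer_solves_variational_inequality
    {X : Type} [MeasurableSpace X] (μ : Measure X) (a : DirichletForm X μ)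
    (A : ℝ) (hA : 0 < A)
    (u : X → ℝ) (hu : u ∈ a.dom) (huinf : eLpNorm u ⊤ μ = 1)
    (hune : eLpNorm u 2 μ ≠ 0)
    (hmin : ∀ v ∈ a.dom, eLpNorm v 2 μ ≠ 0 → MemLp v ⊤ μ →
      (a.form u u + A * ((eLpNorm u ⊤ μ).toReal) ^ 2) / (∫ x, (u x) ^ 2 ∂μ) ≤
        (a.form v v + A * ((eLpNorm v ⊤ μ).toReal) ^ 2) / (∫ x, (v x) ^ 2 ∂μ)) :
    (u ∈ a.dom ∧ (∀ᵐ x ∂μ, |u x| ≤ 1)) ∧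
      ∀ v ∈ a.dom, (∀ᵐ x ∂μ, |v x| ≤ 1) →
        ((a.form u u + A * ((eLpNorm u ⊤ μ).toReal) ^ 2) / (∫ x, (u x) ^ 2 ∂μ)) *
            ∫ x, u x * (v x - u x) ∂μ ≤
          a.form u (v - u) := by
  have hu2 : MemLp u 2 μ := a.memL2 u hu
  -- a.e. bound on u
  have huae : ∀ᵐ x ∂μ, |u x| ≤ 1 := by
    have h := ae_le_eLpNormEssSup (f := u) (μ := μ)
    rw [← eLpNorm_exponent_top, huinf] at h
    filter_upwards [h] with x hx
    have h1 : ‖u x‖₊ ≤ (1 : NNReal) := by rw [enorm_eq_nnnorm] at hx; exact_mod_cast hx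
    have h2 : ‖u x‖ ≤ 1 := by exact_mod_cast h1
    rwa [Real.norm_eq_abs] at h2
  refine ⟨⟨hu, huae⟩, ?_⟩
  intro v hv hvae
  have hv2 : MemLp v 2 μ := a.memL2 v hv
  set z : X → ℝ := v - u with hz
  have hz2 : MemLp z 2 μ := hv2.sub hu2
  have hzdom : z ∈ a.dom := by
    have : z = v + (-1 : ℝ) • u := by
      funext x; simp [hz, sub_eq_add_neg]
    rw [this]
    exact a.dom_add v hv _ (a.dom_smul (-1) u hu)
  -- integrability
  have hIuu : Integrable (fun x => u x ^ 2) μ := hu2.integrable_sq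
  have hIzz : Integrable (fun x => z x ^ 2) μ := hz2.integrable_sq
  have hIuz : Integrable (fun x => u x * z x) μ := by
    have h3 : Integrable (fun x => (u x + z x) ^ 2) μ := (hu2.add hz2).integrable_sq
    have : (fun x => u x * z x)
        = fun x => ((u x + z x) ^ 2 - u x ^ 2 - z x ^ 2) / 2 := by
      funext x; ring
    rw [this]
    exact ((h3.sub hIuu).sub hIzz).div_const 2
  set Q : ℝ := ∫ x, (u x) ^ 2 ∂μ with hQ
  set Bi : ℝ := ∫ x, u x * z x ∂μ with hBi
  set Ci : ℝ := ∫ x, z x ^ 2 ∂μ with hCi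
  have hQpos : 0 < Q := by
    rcases lt_or_eq_of_le (integral_nonneg (fun x => sq_nonneg (u x)) : (0:ℝ) ≤ Q) with h | h
    · exact h
    · exfalso
      have h0 : (fun x => u x ^ 2) =ᵐ[μ] 0 :=
        (integral_eq_zero_iff_of_nonneg (fun x => sq_nonneg (u x)) hIuu).mp h.symm
      have hu0 : u =ᵐ[μ] 0 := by
        filter_upwards [h0] with x hx
        have : u x ^ 2 = 0 := hx
        exact pow_eq_zero_iff (n := 2) (by norm_num) |>.mp this
      apply hune
      rw [eLpNorm_congr_ae hu0, eLpNorm_zero]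
  -- integral expansion
  have hIq : ∀ t : ℝ, ∫ x, (u x + t * z x) ^ 2 ∂μ = Q + 2 * t * Bi + t ^ 2 * Ci := by
    intro t
    have heq : (fun x => (u x + t * z x) ^ 2)
        = fun x => u x ^ 2 + ((2 * t) * (u x * z x) + t ^ 2 * z x ^ 2) := by
      funext x; ring
    have h4 : Integrable (fun x => 2 * t * (u x * z x) + t ^ 2 * z x ^ 2) μ :=
      (hIuz.const_mul _).add (hIzz.const_mul _)
    rw [heq, integral_add hIuu h4,
      integral_add (hIuz.const_mul (2 * t)) (hIzz.const_mul (t ^ 2)),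
      integral_const_mul, integral_const_mul]
    ring
  set J : ℝ := (a.form u u + A * ((eLpNorm u ⊤ μ).toReal) ^ 2) / Q with hJ
  have hNtop : A * ((eLpNorm u ⊤ μ).toReal) ^ 2 = A := by
    rw [huinf]; simp
  have hJQ : J * Q = a.form u u + A := by
    rw [hJ, div_mul_cancel₀ _ (ne_of_gt hQpos), hNtop]
  set Ba : ℝ := a.form u z with hBa
  set Ca : ℝ := a.form z z with hCa
  -- the key small-t inequality
  set R : ℝ := 2 * |Bi| + |Ci| + 1 with hR
  have hRpos : 0 < R := by positivity
  set δ : ℝ := min 1 (Q / R) with hδdef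
  have hδpos : 0 < δ := lt_min one_pos (div_pos hQpos hRpos)
  have key : ∀ t ∈ Set.Ioo (0:ℝ) δ, 2 * (J * Bi - Ba) ≤ t * (Ca - J * Ci) := by
    intro t ht
    obtain ⟨ht0, htδ⟩ := ht
    have ht1 : t ≤ 1 := le_of_lt (lt_of_lt_of_le htδ (min_le_left _ _))
    have htQR : t * R < Q := by
      have : t < Q / R := lt_of_lt_of_le htδ (min_le_right _ _)
      exact (lt_div_iff₀ hRpos).mp this
    set w : X → ℝ := u + t • z with hw
    have hwdom : w ∈ a.dom := a.dom_add u hu _ (a.dom_smul t z hzdom)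
    have hwx : ∀ x, w x = u x + t * z x := fun x => rfl
    have hwae : ∀ᵐ x ∂μ, |w x| ≤ 1 := by
      filter_upwards [huae, hvae] with x hxu hxv
      have : w x = (1 - t) * u x + t * v x := by
        rw [hwx]
        show u x + t * (v x - u x) = _
        ring
      rw [this]
      calc |(1 - t) * u x + t * v x| ≤ |(1 - t) * u x| + |t * v x| := abs_add_le _ _
      _ = (1 - t) * |u x| + t * |v x| := by
          rw [abs_mul, abs_mul, abs_of_nonneg (by linarith : (0:ℝ) ≤ 1 - t),
            abs_of_nonneg (le_of_lt ht0)]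
      _ ≤ (1 - t) * 1 + t * 1 := by
          apply add_le_add
          · exact mul_le_mul_of_nonneg_left hxu (by linarith)
          · exact mul_le_mul_of_nonneg_left hxv (le_of_lt ht0)
      _ = 1 := by ring
    have hwaesm : AEStronglyMeasurable w μ := (hu2.add (hz2.const_smul t)).1
    have hwtop : MemLp w ⊤ μ := by
      refine memLp_top_of_bound hwaesm 1 ?_
      filter_upwards [hwae] with x hx
      rwa [Real.norm_eq_abs]
    have hIqw : ∫ x, (w x) ^ 2 ∂μ = Q + 2 * t * Bi + t ^ 2 * Ci := by
      simp only [hwx]; exact hIq t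
    have hIqpos : 0 < ∫ x, (w x) ^ 2 ∂μ := by
      rw [hIqw]
      have e1 : t * (-|Bi|) ≤ t * Bi := mul_le_mul_of_nonneg_left (neg_abs_le Bi) ht0.le
      have e2a : t ^ 2 * (-|Ci|) ≤ t ^ 2 * Ci :=
        mul_le_mul_of_nonneg_left (neg_abs_le Ci) (sq_nonneg t)
      have htt : t ^ 2 ≤ t := by nlinarith
      have e2b : t ^ 2 * |Ci| ≤ t * |Ci| := mul_le_mul_of_nonneg_right htt (abs_nonneg Ci)
      have hRt : t * R = 2 * (t * |Bi|) + t * |Ci| + t := by rw [hR]; ring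
      nlinarith [e1, e2a, e2b, hRt, htQR, ht0]
    have hw2ne : eLpNorm w 2 μ ≠ 0 := by
      intro hzero
      have hw0 : w =ᵐ[μ] 0 := (eLpNorm_eq_zero_iff hwaesm (by norm_num)).mp hzero
      have : ∫ x, (w x) ^ 2 ∂μ = 0 := by
        rw [integral_congr_ae (g := fun _ => (0:ℝ))]
        · simp
        · filter_upwards [hw0] with x hx
          simp [hx]
      linarith
    have hwinf : ((eLpNorm w ⊤ μ).toReal) ^ 2 ≤ 1 := by
      have h1 : eLpNorm w ⊤ μ ≤ 1 := by
        rw [eLpNorm_exponent_top]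
        have := eLpNormEssSup_le_of_ae_bound (μ := μ) (f := w) (C := 1)
          (by filter_upwards [hwae] with x hx; rwa [Real.norm_eq_abs])
        simpa using this
      have h2 : (eLpNorm w ⊤ μ).toReal ≤ 1 := by
        have := ENNReal.toReal_mono (by norm_num) h1
        simpa using this
      have h3 : 0 ≤ (eLpNorm w ⊤ μ).toReal := ENNReal.toReal_nonneg
      nlinarith
    have hlow := hmin w hwdom hw2ne hwtop
    have hJle : J ≤ (a.form w w + A) / ∫ x, (w x) ^ 2 ∂μ := by
      refine hlow.trans ?_
      have hnum : a.form w w + A * ((eLpNorm w ⊤ μ).toReal) ^ 2 ≤ a.form w w + A := by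
        have : A * ((eLpNorm w ⊤ μ).toReal) ^ 2 ≤ A * 1 :=
          mul_le_mul_of_nonneg_left hwinf (le_of_lt hA)
        linarith
      gcongr
    have hmul : J * ∫ x, (w x) ^ 2 ∂μ ≤ a.form w w + A :=
      (le_div_iff₀ hIqpos).mp hJle
    have hformw : a.form w w = a.form u u + 2 * t * Ba + t ^ 2 * Ca := a.expand u z t
    rw [hIqw, hformw] at hmul
    have hexp : J * (Q + 2 * t * Bi + t ^ 2 * Ci)
        = J * Q + 2 * t * (J * Bi) + t ^ 2 * (J * Ci) := by ring
    rw [hexp, hJQ] at hmul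
    have h5 : t * (2 * (J * Bi) + t * (J * Ci)) ≤ t * (2 * Ba + t * Ca) := by
      linarith only [hmul]
    have h6 : 2 * (J * Bi) + t * (J * Ci) ≤ 2 * Ba + t * Ca :=
      (mul_le_mul_iff_right₀ ht0).mp h5
    linarith only [h6]
  -- pass to the limit t → 0⁺
  have hlim : Tendsto (fun t : ℝ => t * (Ca - J * Ci)) (𝓝[>] (0:ℝ)) (𝓝 0) := by
    have : Tendsto (fun t : ℝ => t * (Ca - J * Ci)) (𝓝 (0:ℝ)) (𝓝 (0 * (Ca - J * Ci))) :=
      (continuous_id.mul continuous_const).tendsto 0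
    rw [zero_mul] at this
    exact this.mono_left nhdsWithin_le_nhds
  have hev : ∀ᶠ t in 𝓝[>] (0:ℝ), 2 * (J * Bi - Ba) ≤ t * (Ca - J * Ci) := by
    filter_upwards [Ioo_mem_nhdsGT_of_mem (Set.mem_Ico.mpr ⟨le_refl 0, hδpos⟩)] with t ht
    exact key t ht
  have hfinal : 2 * (J * Bi - Ba) ≤ 0 := ge_of_tendsto hlim hev
  have hJBi : J * Bi ≤ Ba := by linarith
  -- conclude
  have hBieq : (∫ x, u x * (v x - u x) ∂μ) = Bi := by
    rw [hBi]
    simp only [hz, Pi.sub_apply]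
  rw [hBieq]
  exact hJBi
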